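/- (Set-likeness of E.) Let ⟨f,a⟩, ⟨g,b⟩ ∈ Π with ⟨f,a⟩ E ⟨g,b⟩, and put s := ⋃{g(v) : v ∈ dom(g)} (the union of the range of g; note s ∉ s by regularity). Then there exists f₀ ∈ 𝓕 with dom(f₀) = dom(f) such that f₀(u) ∈ s ∪ {s} for every u ∈ dom(f₀), and ⟨f₀, a⟩ ∼ ⟨f, a⟩. In particular, every E-predecessor of ⟨g,b⟩/∼ in Π/∼ has a representative whose first coordinate takes values in the fixed set s ∪ {s}. (Claim 3.3.4 (2).) -/

import Mathlib

open FirstOrder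
open scoped ZFSet

/-- The language `L_ε` with a single binary relation symbol (Mathlib's graph language,
whose unique binary relation we interpret as membership). -/
abbrev Lε : FirstOrder.Language := FirstOrder.Language.graph

/-- Any type with a binary relation is an `L_ε`-structure. -/
def memStruc (S : Type*) (r : S → S → Prop) : Lε.Structure S where
  RelMap | .adj => fun x => r (x 0) (x 1)

/-- Satisfaction of an `L_ε`-formula in the structure given by a binary relation `r` on `S`. -/
def RealizeIn (S : Type*) (r : S → S → Prop) {n : ℕ}
    (φ : Lε.Formula (Fin n)) (v : Fin n → S) : Prop :=
  @FirstOrder.Language.Formula.Realize Lε S (memStruc S r) _ φ v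

/-- `f` is a ZFSet-function: a single-valued set of (Kuratowski) ordered pairs. -/
def IsZFFunc (f : ZFSet) : Prop :=
  (∀ p ∈ f, ∃ x y : ZFSet, p = ZFSet.pair x y) ∧
    ∀ x y y' : ZFSet, ZFSet.pair x y ∈ f → ZFSet.pair x y' ∈ f → y = y'

/-- The domain of a ZFSet-function. -/
def dom (f : ZFSet) : ZFSet :=
  ZFSet.sep (fun x => ∃ y : ZFSet, ZFSet.pair x y ∈ f) (⋃₀ ⋃₀ f)

/-- `f` is a ZFSet-function with domain `I`. -/
def IsFuncOn (I f : ZFSet) : Prop := IsZFFunc f ∧ dom f = I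

open Classical in
/-- The value `f(x)` of a ZFSet-function at `x`. -/
noncomputable def app (f x : ZFSet) : ZFSet :=
  if h : ∃ y : ZFSet, ZFSet.pair x y ∈ f then h.choose else ∅

/-- The `n`-tuple `⟨u₀,…,u_{n-1}⟩` coded as iterated Kuratowski pairs. -/
def tup : {n : ℕ} → (Fin n → ZFSet) → ZFSet
  | 0, _ => ∅
  | _ + 1, v => ZFSet.pair (v 0) (tup (Fin.tail v))

/-- The `n`-fold cartesian product `d 0 × ⋯ × d (n-1)` of ZFSets (as a set of `tup`s). -/
def nprod : {n : ℕ} → (Fin n → ZFSet) → ZFSet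
  | 0, _ => {∅}
  | _ + 1, d => ZFSet.prod (d 0) (nprod (Fin.tail d))

/-- The formula `x₀ = x₁` of `L_ε`. -/
def eqFm : Lε.Formula (Fin 2) :=
  FirstOrder.Language.Term.equal (FirstOrder.Language.Term.var 0)
    (FirstOrder.Language.Term.var 1)

/-- The formula `x₀ ε x₁` of `L_ε`. -/
def memFm : Lε.Formula (Fin 2) :=
  FirstOrder.Language.Relations.formula₂ FirstOrder.Language.adj
    (FirstOrder.Language.Term.var 0) (FirstOrder.Language.Term.var 1)

/-- `S_{φ(f₀(x₀),…,f_{n-1}(x_{n-1}))}`: the ZFSet of tuples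
`⟨u₀,…,u_{n-1}⟩ ∈ dom f₀ × ⋯ × dom f_{n-1}` such that `φ(f₀(u₀),…,f_{n-1}(u_{n-1}))`
holds in `(ZFSet, ∈)`. -/
def Sset {n : ℕ} (φ : Lε.Formula (Fin n)) (f : Fin n → ZFSet) : ZFSet :=
  ZFSet.sep
    (fun t => ∃ u : Fin n → ZFSet, t = tup u ∧ (∀ i : Fin n, u i ∈ dom (f i)) ∧
      RealizeIn ZFSet (· ∈ ·) φ (fun i => app (f i) (u i)))
    (nprod (fun i => dom (f i)))

/-- `⟨f,a⟩ ∼ ⟨g,b⟩ :⟺ ⟨a,b⟩ ∈ j₀(S_{f(x)=g(y)})`. -/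
def simP (j₀ : ZFSet → ZFSet) (f a g b : ZFSet) : Prop :=
  tup ![a, b] ∈ j₀ (Sset eqFm ![f, g])

/-- `⟨f,a⟩ E ⟨g,b⟩ :⟺ ⟨a,b⟩ ∈ j₀(S_{f(x) ε g(y)})`. -/
def EP (j₀ : ZFSet → ZFSet) (f a g b : ZFSet) : Prop :=
  tup ![a, b] ∈ j₀ (Sset memFm ![f, g])

/-- The pair `⟨f,a⟩` belongs to `Π`: `f` is a ZFSet-function whose domain lies in `A`,
and `a ∈ j₀(dom f)`. -/
def PiP (A : ZFSet) (j₀ : ZFSet → ZFSet) (f a : ZFSet) : Prop :=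
  IsZFFunc f ∧ dom f ∈ A ∧ a ∈ j₀ (dom f)

/-- The collection `Π`. -/
abbrev PiT (A : ZFSet) (j₀ : ZFSet → ZFSet) := {p : ZFSet × ZFSet // PiP A j₀ p.1 p.2}

/-- `∼` as a relation on `Π`. -/
def simT (A : ZFSet) (j₀ : ZFSet → ZFSet) (p q : PiT A j₀) : Prop :=
  simP j₀ p.1.1 p.1.2 q.1.1 q.1.2

/-- The quotient `Π/∼`. -/
def QPi (A : ZFSet) (j₀ : ZFSet → ZFSet) := Quot (simT A j₀)

/-- The relation `E` induced on `Π/∼`: two classes are `E`-related iff they have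
`E`-related representatives (for a congruence this is the usual induced relation). -/
def EQPi (A : ZFSet) (j₀ : ZFSet → ZFSet) (x y : QPi A j₀) : Prop :=
  ∃ p q : PiT A j₀, x = Quot.mk (simT A j₀) p ∧ y = Quot.mk (simT A j₀) q ∧
    EP j₀ p.1.1 p.1.2 q.1.1 q.1.2

/-- The range of a ZFSet-function. -/
def rng (f : ZFSet) : ZFSet :=
  ZFSet.sep (fun y => ∃ x : ZFSet, ZFSet.pair x y ∈ f) (⋃₀ ⋃₀ f)

namespace C334
open FirstOrder.Language

abbrev BF (k : ℕ) := Lε.BoundedFormula (Fin 2) k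

def vt {k : ℕ} (i : Fin 2 ⊕ Fin k) : Lε.Term (Fin 2 ⊕ Fin k) := Term.var i

def memB {k : ℕ} (i j : Fin 2 ⊕ Fin k) : BF k :=
  Relations.boundedFormula₂ FirstOrder.Language.adj (vt i) (vt j)

def eqB {k : ℕ} (i j : Fin 2 ⊕ Fin k) : BF k := Term.bdEqual (vt i) (vt j)

def up {k : ℕ} : Fin 2 ⊕ Fin k → Fin 2 ⊕ Fin (k + 1) := Sum.map id Fin.castSucc

def lastv (k : ℕ) : Fin 2 ⊕ Fin (k + 1) := Sum.inr (Fin.last k)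

def singF {k : ℕ} (z u : Fin 2 ⊕ Fin k) : BF k :=
  BoundedFormula.all ((memB (lastv k) (up z)).iff (eqB (lastv k) (up u)))

def doubF {k : ℕ} (z u t : Fin 2 ⊕ Fin k) : BF k :=
  BoundedFormula.all ((memB (lastv k) (up z)).iff
    ((eqB (lastv k) (up u)) ⊔ (eqB (lastv k) (up t))))

def pairEqF {k : ℕ} (q u t : Fin 2 ⊕ Fin k) : BF k :=
  (BoundedFormula.all ((memB (lastv k) (up q)).imp
      ((singF (lastv k) (up u)) ⊔ (doubF (lastv k) (up u) (up t))))) ⊓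
  ((BoundedFormula.ex ((memB (lastv k) (up q)) ⊓ (singF (lastv k) (up u)))) ⊓
   (BoundedFormula.ex ((memB (lastv k) (up q)) ⊓ (doubF (lastv k) (up u) (up t)))))

def emptyF {k : ℕ} (z : Fin 2 ⊕ Fin k) : BF k :=
  BoundedFormula.all (BoundedFormula.not (memB (lastv k) (up z)))

def tupEqF {k : ℕ} (p u v : Fin 2 ⊕ Fin k) : BF k :=
  BoundedFormula.ex (BoundedFormula.ex
    ((pairEqF (up (up p)) (up (up u)) (up (lastv k)) ⊓
      pairEqF (up (lastv k)) (up (up v)) (lastv (k + 1))) ⊓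
      emptyF (lastv (k + 1))))

def Phi : Lε.Formula (Fin 2) :=
  BoundedFormula.all (BoundedFormula.all (BoundedFormula.all
    (((memB (Sum.inr 2) (Sum.inl 0)) ⊓ tupEqF (Sum.inr 2) (Sum.inr 0) (Sum.inr 1)).imp
      (BoundedFormula.ex ((memB (Sum.inr 3) (Sum.inl 1)) ⊓
        tupEqF (Sum.inr 3) (Sum.inr 0) (Sum.inr 0))))))

section Realize
variable {S : Type*} (r : S → S → Prop)

def SingR (z u : S) : Prop := ∀ w, r w z ↔ w = u
def DoubR (z u t : S) : Prop := ∀ w, r w z ↔ (w = u ∨ w = t)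
def PairEqR (q u t : S) : Prop :=
  (∀ z, r z q → (SingR r z u ∨ DoubR r z u t)) ∧
    (∃ z, r z q ∧ SingR r z u) ∧ (∃ z, r z q ∧ DoubR r z u t)
def TupEqR (p u v : S) : Prop :=
  ∃ t z, PairEqR r p u t ∧ PairEqR r t v z ∧ ∀ w, ¬ r w z

lemma relMap_adj (x : Fin 2 → S) :
    @Structure.RelMap Lε S (memStruc S r) 2 FirstOrder.Language.adj x = r (x 0) (x 1) := rfl

lemma elim_up {k : ℕ} (v : Fin 2 → S) (xs : Fin k → S) (x : S) (i : Fin 2 ⊕ Fin k) :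
    Sum.elim v (Fin.snoc xs x) (up i) = Sum.elim v xs i := by
  cases i <;> simp [up]

lemma elim_last {k : ℕ} (v : Fin 2 → S) (xs : Fin k → S) (x : S) :
    Sum.elim v (Fin.snoc xs x) (lastv k) = x := by simp [lastv]

lemma realize_memB {k : ℕ} (i j : Fin 2 ⊕ Fin k) (v : Fin 2 → S) (xs : Fin k → S) :
    @BoundedFormula.Realize Lε S (memStruc S r) (Fin 2) k (memB i j) v xs ↔
      r (Sum.elim v xs i) (Sum.elim v xs j) := by
  letI := memStruc S r
  simp [memB, vt, BoundedFormula.realize_rel₂, relMap_adj]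

lemma realize_eqB {k : ℕ} (i j : Fin 2 ⊕ Fin k) (v : Fin 2 → S) (xs : Fin k → S) :
    @BoundedFormula.Realize Lε S (memStruc S r) (Fin 2) k (eqB i j) v xs ↔
      (Sum.elim v xs i = Sum.elim v xs j) := by
  letI := memStruc S r
  simp [eqB, vt, BoundedFormula.realize_bdEqual]

lemma realize_singF {k : ℕ} (z u : Fin 2 ⊕ Fin k) (v : Fin 2 → S) (xs : Fin k → S) :
    @BoundedFormula.Realize Lε S (memStruc S r) (Fin 2) k (singF z u) v xs ↔
      SingR r (Sum.elim v xs z) (Sum.elim v xs u) := by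
  letI := memStruc S r
  simp [singF, SingR, BoundedFormula.realize_all, BoundedFormula.realize_iff,
    realize_memB, realize_eqB, elim_up, elim_last]


lemma realize_doubF {k : ℕ} (z u t : Fin 2 ⊕ Fin k) (v : Fin 2 → S) (xs : Fin k → S) :
    @BoundedFormula.Realize Lε S (memStruc S r) (Fin 2) k (doubF z u t) v xs ↔
      DoubR r (Sum.elim v xs z) (Sum.elim v xs u) (Sum.elim v xs t) := by
  letI := memStruc S r
  simp [doubF, DoubR, BoundedFormula.realize_all, BoundedFormula.realize_iff,
    BoundedFormula.realize_sup, realize_memB, realize_eqB, elim_up, elim_last]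

lemma realize_pairEqF {k : ℕ} (q u t : Fin 2 ⊕ Fin k) (v : Fin 2 → S) (xs : Fin k → S) :
    @BoundedFormula.Realize Lε S (memStruc S r) (Fin 2) k (pairEqF q u t) v xs ↔
      PairEqR r (Sum.elim v xs q) (Sum.elim v xs u) (Sum.elim v xs t) := by
  letI := memStruc S r
  simp [pairEqF, PairEqR, BoundedFormula.realize_all, BoundedFormula.realize_ex,
    BoundedFormula.realize_inf, BoundedFormula.realize_sup, BoundedFormula.realize_imp,
    realize_memB, realize_singF, realize_doubF, elim_up, elim_last]

lemma realize_emptyF {k : ℕ} (z : Fin 2 ⊕ Fin k) (v : Fin 2 → S) (xs : Fin k → S) :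
    @BoundedFormula.Realize Lε S (memStruc S r) (Fin 2) k (emptyF z) v xs ↔
      ∀ w, ¬ r w (Sum.elim v xs z) := by
  letI := memStruc S r
  simp [emptyF, BoundedFormula.realize_all, BoundedFormula.realize_not,
    realize_memB, elim_up, elim_last]

lemma realize_tupEqF {k : ℕ} (p u w : Fin 2 ⊕ Fin k) (v : Fin 2 → S) (xs : Fin k → S) :
    @BoundedFormula.Realize Lε S (memStruc S r) (Fin 2) k (tupEqF p u w) v xs ↔
      TupEqR r (Sum.elim v xs p) (Sum.elim v xs u) (Sum.elim v xs w) := by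
  letI := memStruc S r
  simp [tupEqF, TupEqR, BoundedFormula.realize_ex, BoundedFormula.realize_inf,
    realize_pairEqF, realize_emptyF, elim_up, elim_last]
  tauto

lemma realize_Phi (v : Fin 2 → S) :
    RealizeIn S r Phi v ↔
      ∀ u w p : S, (r p (v 0) ∧ TupEqR r p u w) → ∃ q, r q (v 1) ∧ TupEqR r q u u := by
  letI := memStruc S r
  show @BoundedFormula.Realize Lε S (memStruc S r) (Fin 2) 0 Phi v default ↔ _
  simp only [Phi, BoundedFormula.realize_all, BoundedFormula.realize_ex,
    BoundedFormula.realize_inf, BoundedFormula.realize_imp,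
    realize_memB, realize_tupEqF]
  constructor
  · intro h u w p hp
    have := h u w p
    simp only [Fin.snoc, Sum.elim_inr, Sum.elim_inl] at this ⊢
    norm_num at this
    obtain ⟨q, hq⟩ := this hp.1 hp.2
    exact ⟨q, hq⟩
  · intro h u w p
    simp only [Fin.snoc, Sum.elim_inr, Sum.elim_inl]
    norm_num
    intro h1 h2
    exact h u w p ⟨h1, h2⟩

end Realize

section Abs
variable {M : ZFSet} (hM : M.IsTransitive)

/-- membership relation on the subtype of a ZFSet -/
abbrev mr (M : ZFSet) : {x : ZFSet // x ∈ M} → {x : ZFSet // x ∈ M} → Prop :=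
  fun a b => a.1 ∈ b.1

lemma singR_iff (hM : M.IsTransitive) (z u : {x : ZFSet // x ∈ M}) :
    SingR (mr M) z u ↔ z.1 = ({u.1} : ZFSet) := by
  constructor
  · intro h
    ext y
    simp only [ZFSet.mem_singleton]
    constructor
    · intro hy
      have hyM : y ∈ M := hM.mem_trans hy z.2
      exact congrArg Subtype.val ((h ⟨y, hyM⟩).mp hy)
    · rintro rfl
      exact (h u).mpr rfl
  · rintro h w
    rw [mr, h, ZFSet.mem_singleton]
    exact ⟨fun hw => Subtype.ext hw, fun hw => congrArg Subtype.val hw⟩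

lemma doubR_iff (hM : M.IsTransitive) (z u t : {x : ZFSet // x ∈ M}) :
    DoubR (mr M) z u t ↔ z.1 = ({u.1, t.1} : ZFSet) := by
  constructor
  · intro h
    ext y
    simp only [ZFSet.mem_insert_iff, ZFSet.mem_singleton]
    constructor
    · intro hy
      have hyM : y ∈ M := hM.mem_trans hy z.2
      rcases (h ⟨y, hyM⟩).mp hy with h1 | h1
      · exact Or.inl (congrArg Subtype.val h1)
      · exact Or.inr (congrArg Subtype.val h1)
    · rintro (rfl | rfl)
      · exact (h u).mpr (Or.inl rfl)
      · exact (h t).mpr (Or.inr rfl)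
  · rintro h w
    rw [mr, h, ZFSet.mem_insert_iff, ZFSet.mem_singleton]
    constructor
    · rintro (hw | hw)
      · exact Or.inl (Subtype.ext hw)
      · exact Or.inr (Subtype.ext hw)
    · rintro (rfl | rfl)
      · exact Or.inl rfl
      · exact Or.inr rfl

lemma pairEqR_iff (hM : M.IsTransitive) (q u t : {x : ZFSet // x ∈ M}) :
    PairEqR (mr M) q u t ↔ q.1 = ZFSet.pair u.1 t.1 := by
  constructor
  · rintro ⟨h1, ⟨z1, hz1, hs1⟩, ⟨z2, hz2, hd2⟩⟩
    have hz1' := (singR_iff hM _ _).mp hs1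
    have hz2' := (doubR_iff hM _ _ _).mp hd2
    ext y
    simp only [ZFSet.pair, ZFSet.mem_insert_iff, ZFSet.mem_singleton]
    constructor
    · intro hy
      have hyM : y ∈ M := hM.mem_trans hy q.2
      rcases h1 ⟨y, hyM⟩ hy with h | h
      · exact Or.inl ((singR_iff hM _ _).mp h)
      · exact Or.inr ((doubR_iff hM _ _ _).mp h)
    · rintro (rfl | rfl)
      · rwa [← hz1']
      · rwa [← hz2']
  · intro h
    have hqM : q.1 ⊆ M := hM.subset_of_mem q.2
    have h1M : ({u.1} : ZFSet) ∈ M := by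
      apply hqM; rw [h]; simp [ZFSet.pair]
    have h2M : ({u.1, t.1} : ZFSet) ∈ M := by
      apply hqM; rw [h]; simp [ZFSet.pair]
    refine ⟨?_, ⟨⟨{u.1}, h1M⟩, ?_, (singR_iff hM _ _).mpr rfl⟩,
      ⟨⟨{u.1, t.1}, h2M⟩, ?_, (doubR_iff hM _ _ _).mpr rfl⟩⟩
    · intro z hz
      have : z.1 ∈ ZFSet.pair u.1 t.1 := h ▸ hz
      simp only [ZFSet.pair, ZFSet.mem_insert_iff, ZFSet.mem_singleton] at this
      rcases this with h' | h'
      · exact Or.inl ((singR_iff hM _ _).mpr h')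
      · exact Or.inr ((doubR_iff hM _ _ _).mpr h')
    · show ({u.1} : ZFSet) ∈ q.1
      rw [h]; simp [ZFSet.pair]
    · show ({u.1, t.1} : ZFSet) ∈ q.1
      rw [h]; simp [ZFSet.pair]

lemma tup_two (x y : ZFSet) : tup ![x, y] = ZFSet.pair x (ZFSet.pair y ∅) := rfl

lemma tupEqR_iff (hM : M.IsTransitive) (p u w : {x : ZFSet // x ∈ M}) :
    TupEqR (mr M) p u w ↔ p.1 = tup ![u.1, w.1] := by
  rw [tup_two]
  constructor
  · rintro ⟨t, z, h1, h2, h3⟩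
    have hz : z.1 = ∅ := by
      rw [ZFSet.eq_empty]
      intro y hy
      exact h3 ⟨y, hM.mem_trans hy z.2⟩ hy
    rw [(pairEqR_iff hM _ _ _).mp h1, (pairEqR_iff hM _ _ _).mp h2, hz]
  · intro h
    have hpM : ZFSet.pair w.1 ∅ ∈ M := by
      have h1 : ZFSet.pair w.1 ∅ ∈ ({u.1, ZFSet.pair w.1 ∅} : ZFSet) := by simp
      have h2 : ({u.1, ZFSet.pair w.1 ∅} : ZFSet) ∈ p.1 := by
        rw [h]; simp [ZFSet.pair]
      exact hM.mem_trans h1 (hM.mem_trans h2 p.2)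
    have heM : (∅ : ZFSet) ∈ M := by
      have h1 : (∅ : ZFSet) ∈ ({w.1, (∅ : ZFSet)} : ZFSet) := by simp
      have h2 : ({w.1, (∅ : ZFSet)} : ZFSet) ∈ ZFSet.pair w.1 ∅ := by simp [ZFSet.pair]
      exact hM.mem_trans h1 (hM.mem_trans h2 hpM)
    refine ⟨⟨ZFSet.pair w.1 ∅, hpM⟩, ⟨∅, heM⟩, ?_, ?_, ?_⟩
    · exact (pairEqR_iff hM _ _ _).mpr h
    · exact (pairEqR_iff hM _ _ _).mpr rfl
    · intro y hy
      exact ZFSet.notMem_empty y.1 hy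

end Abs

section ZF

lemma mem_dom {f x : ZFSet} : x ∈ dom f ↔ ∃ y : ZFSet, ZFSet.pair x y ∈ f := by
  rw [dom, ZFSet.mem_sep]
  constructor
  · exact fun h => h.2
  · rintro ⟨y, hy⟩
    refine ⟨ZFSet.mem_sUnion.mpr ⟨{x}, ZFSet.mem_sUnion.mpr ⟨ZFSet.pair x y, hy, ?_⟩, ?_⟩, y, hy⟩
    · simp [ZFSet.pair]
    · simp

lemma app_eq {f x y : ZFSet} (hf : IsZFFunc f) (h : ZFSet.pair x y ∈ f) : app f x = y := by
  have hex : ∃ y, ZFSet.pair x y ∈ f := ⟨y, h⟩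
  rw [app, dif_pos hex]
  exact hf.2 x _ y hex.choose_spec h

lemma mem_rng {g x y : ZFSet} (h : ZFSet.pair x y ∈ g) : y ∈ rng g := by
  rw [rng, ZFSet.mem_sep]
  refine ⟨ZFSet.mem_sUnion.mpr ⟨{x, y}, ZFSet.mem_sUnion.mpr ⟨ZFSet.pair x y, h, ?_⟩, ?_⟩, x, h⟩
  · simp [ZFSet.pair]
  · simp

lemma app_mem_rng {g v : ZFSet} (hg : IsZFFunc g) (hv : v ∈ dom g) : app g v ∈ rng g := by
  obtain ⟨y, hy⟩ := mem_dom.mp hv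
  rw [app_eq hg hy]
  exact mem_rng hy

lemma nprod_two (d : Fin 2 → ZFSet) : nprod d = ZFSet.prod (d 0) (ZFSet.prod (d 1) {∅}) := rfl

lemma tup_two' (w : Fin 2 → ZFSet) : tup w = ZFSet.pair (w 0) (ZFSet.pair (w 1) ∅) := rfl

lemma realize_eqFm {S : Type*} (r : S → S → Prop) (x y : S) :
    RealizeIn S r eqFm ![x, y] ↔ x = y := by
  letI := memStruc S r
  show @Language.Formula.Realize Lε S (memStruc S r) (Fin 2) eqFm ![x, y] ↔ x = y
  simp [eqFm, Language.Formula.realize_equal]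

lemma realize_memFm {S : Type*} (r : S → S → Prop) (x y : S) :
    RealizeIn S r memFm ![x, y] ↔ r x y := by
  letI := memStruc S r
  show @Language.Formula.Realize Lε S (memStruc S r) (Fin 2) memFm ![x, y] ↔ r x y
  rw [memFm, Language.Formula.realize_rel₂]
  rw [show (Language.Term.realize ![x,y] (Language.Term.var 0)) = x from rfl,
    show (Language.Term.realize ![x,y] (Language.Term.var 1)) = y from rfl]
  rw [relMap_adj]
  simp

lemma mem_Sset₂ {φ : Lε.Formula (Fin 2)} {f g u v : ZFSet} :
    tup ![u, v] ∈ Sset φ ![f, g] ↔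
      u ∈ dom f ∧ v ∈ dom g ∧ RealizeIn ZFSet (· ∈ ·) φ ![app f u, app g v] := by
  rw [Sset, ZFSet.mem_sep]
  constructor
  · rintro ⟨-, w, hw, hdom, hr⟩
    have h2 : ZFSet.pair u (ZFSet.pair v ∅) = ZFSet.pair (w 0) (ZFSet.pair (w 1) ∅) := by
      rw [← tup_two' w, ← hw]; rfl
    obtain ⟨h3, h4⟩ := ZFSet.pair_injective h2
    obtain ⟨h5, -⟩ := ZFSet.pair_injective h4
    have hvfun : (fun i => app (![f, g] i) (w i)) = ![app f u, app g v] := by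
      funext i
      fin_cases i
      · show app f (w 0) = app f u
        rw [h3]
      · show app g (w 1) = app g v
        rw [h5]
    refine ⟨?_, ?_, ?_⟩
    · rw [h3]; exact hdom 0
    · rw [h5]; exact hdom 1
    · rw [← hvfun]; exact hr
  · rintro ⟨h1, h2, h3⟩
    refine ⟨?_, ![u, v], rfl, ?_, ?_⟩
    · rw [nprod_two, tup_two']
      show ZFSet.pair u (ZFSet.pair v ∅) ∈ _
      rw [ZFSet.pair_mem_prod]
      refine ⟨h1, ?_⟩
      rw [ZFSet.pair_mem_prod]
      exact ⟨h2, by simp⟩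
    · intro i; fin_cases i
      · exact h1
      · exact h2
    · have hvfun : (fun i => app (![f, g] i) (![u, v] i)) = ![app f u, app g v] := by
        funext i; fin_cases i <;> rfl
      rw [hvfun]; exact h3

lemma empty_mem {A : ZFSet} (hA : A.IsTransitive) : ∀ a : ZFSet, a ∈ A → (∅ : ZFSet) ∈ A := by
  intro a
  induction a using ZFSet.inductionOn with
  | _ a ih =>
    intro ha
    rcases ZFSet.eq_empty_or_nonempty a with rfl | ⟨b, hb⟩
    · exact ha
    · exact ih b hb (hA.mem_trans hb ha)

end ZF
end C334


/-- Claim 3.3.4 (2) (set-likeness of `E`): if `⟨f,a⟩ E ⟨g,b⟩` in `Π` and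
`s := ⋃ rng(g)`, then `s ∉ s`, and there is `f₀ ∈ 𝓕` with `dom f₀ = dom f`, taking all
its values in `s ∪ {s}`, such that `⟨f₀,a⟩ ∼ ⟨f,a⟩`. -/
theorem claim_3_3_4_2
    (A N : ZFSet) (hA : A.IsTransitive) (hN : N.IsTransitive)
    (j₀ : ZFSet → ZFSet) (hj : ∀ a ∈ A, j₀ a ∈ N)
    (helem : ∀ (n : ℕ) (φ : Lε.Formula (Fin n)) (v : Fin n → {x : ZFSet // x ∈ A}),
      RealizeIn {x : ZFSet // x ∈ A} (fun a b => a.1 ∈ b.1) φ v ↔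
        RealizeIn {x : ZFSet // x ∈ N} (fun a b => a.1 ∈ b.1) φ
          (fun i => ⟨j₀ (v i).1, hj (v i).1 (v i).2⟩))
    (hneA : ∃ a : ZFSet, a ∈ A)
    (hpairA : ∀ a ∈ A, ∀ b ∈ A, ({a, b} : ZFSet) ∈ A)
    (hunionA : ∀ a ∈ A, (⋃₀ a : ZFSet) ∈ A)
    (hprodA : ∀ a ∈ A, ∀ b ∈ A, ZFSet.prod a b ∈ A)
    (hsubA : ∀ s a : ZFSet, a ∈ A → s ⊆ a → s ∈ A)
 :
    ∀ f a g b : ZFSet, PiP A j₀ f a → PiP A j₀ g b → EP j₀ f a g b →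
      (⋃₀ rng g : ZFSet) ∉ (⋃₀ rng g : ZFSet) ∧
      ∃ f₀ : ZFSet, IsZFFunc f₀ ∧ dom f₀ = dom f ∧
        (∀ u ∈ dom f₀, app f₀ u ∈ (⋃₀ rng g : ZFSet) ∪ {(⋃₀ rng g : ZFSet)}) ∧
        simP j₀ f₀ a f a := by
  intro f a g b hf hg hEP
  obtain ⟨hfFun, hdfA, haj⟩ := hf
  obtain ⟨hgFun, hdgA, hbj⟩ := hg
  classical
  set s : ZFSet := ⋃₀ rng g with hs
  refine ⟨ZFSet.mem_irrefl s, ?_⟩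
  set vfn : ZFSet → ZFSet := fun u => if app f u ∈ s then app f u else s with hvfn
  set f₀ : ZFSet := ZFSet.sep (fun q => ∃ u ∈ dom f, q = ZFSet.pair u (vfn u))
      (ZFSet.prod (dom f) (s ∪ {s})) with hf₀
  have hvfn_mem : ∀ u, vfn u ∈ s ∪ {s} := by
    intro u
    show (if app f u ∈ s then app f u else s) ∈ s ∪ {s}
    split_ifs with h
    · exact ZFSet.mem_union.mpr (Or.inl h)
    · exact ZFSet.mem_union.mpr (Or.inr (ZFSet.mem_singleton.mpr rfl))
  have hmemf₀ : ∀ q, q ∈ f₀ ↔ ∃ u ∈ dom f, q = ZFSet.pair u (vfn u) := by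
    intro q
    rw [hf₀, ZFSet.mem_sep]
    constructor
    · exact fun h => h.2
    · rintro ⟨u, hu, rfl⟩
      exact ⟨ZFSet.pair_mem_prod.mpr ⟨hu, hvfn_mem u⟩, u, hu, rfl⟩
  have hf₀Fun : IsZFFunc f₀ := by
    constructor
    · intro p hp
      obtain ⟨u, hu, rfl⟩ := (hmemf₀ p).mp hp
      exact ⟨u, vfn u, rfl⟩
    · intro x y y' h h'
      obtain ⟨u, hu, hq⟩ := (hmemf₀ _).mp h
      obtain ⟨u', hu', hq'⟩ := (hmemf₀ _).mp h'
      obtain ⟨rfl, rfl⟩ := ZFSet.pair_injective hq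
      obtain ⟨h1, rfl⟩ := ZFSet.pair_injective hq'
      rw [h1]
  have hdomf₀ : dom f₀ = dom f := by
    apply ZFSet.ext
    intro x
    rw [C334.mem_dom, C334.mem_dom]
    constructor
    · rintro ⟨y, hy⟩
      obtain ⟨u, hu, hq⟩ := (hmemf₀ _).mp hy
      obtain ⟨rfl, -⟩ := ZFSet.pair_injective hq
      exact C334.mem_dom.mp hu
    · intro hx
      exact ⟨vfn x, (hmemf₀ _).mpr ⟨x, C334.mem_dom.mpr hx, rfl⟩⟩
  have happf₀ : ∀ u ∈ dom f, app f₀ u = vfn u := fun u hu =>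
    C334.app_eq hf₀Fun ((hmemf₀ _).mpr ⟨u, hu, rfl⟩)
  have hemp : (∅ : ZFSet) ∈ A := by
    obtain ⟨a0, ha0⟩ := hneA
    exact C334.empty_mem hA a0 ha0
  have hsingA : ({∅} : ZFSet) ∈ A := by
    have h := hpairA ∅ hemp ∅ hemp
    have h2 : ({∅, ∅} : ZFSet) = ({∅} : ZFSet) := by
      apply ZFSet.ext; intro y; simp [ZFSet.mem_insert_iff]
    rwa [h2] at h
  have hdomf₀A : dom f₀ ∈ A := by rw [hdomf₀]; exact hdfA
  have hSsetA : ∀ (φ : Lε.Formula (Fin 2)) (h₁ h₂ : ZFSet), dom h₁ ∈ A → dom h₂ ∈ A →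
      Sset φ ![h₁, h₂] ∈ A := by
    intro φ h₁ h₂ hd1 hd2
    refine hsubA _ (nprod (fun i => dom (![h₁, h₂] i))) ?_ ?_
    · rw [show nprod (fun i => dom (![h₁, h₂] i)) =
        ZFSet.prod (dom h₁) (ZFSet.prod (dom h₂) {∅}) from rfl]
      exact hprodA _ hd1 _ (hprodA _ hd2 _ hsingA)
    · intro z hz
      exact (ZFSet.mem_sep.mp hz).1
  set Smem : ZFSet := Sset memFm ![f, g] with hSmemdef
  set Seq : ZFSet := Sset eqFm ![f₀, f] with hSeqdef
  have hSmemA : Smem ∈ A := hSsetA memFm f g hdfA hdgA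
  have hSeqA : Seq ∈ A := hSsetA eqFm f₀ f hdomf₀A hdfA
  have key : ∀ u v : ZFSet, tup ![u, v] ∈ Smem → tup ![u, u] ∈ Seq := by
    intro u v hm
    obtain ⟨hu, hv, hr⟩ := C334.mem_Sset₂.mp hm
    have hmem : app f u ∈ app g v := (C334.realize_memFm _ _ _).mp hr
    have hfs : app f u ∈ s := ZFSet.mem_sUnion.mpr ⟨app g v, C334.app_mem_rng hgFun hv, hmem⟩
    have happ : app f₀ u = app f u := by
      rw [happf₀ u hu]
      show (if app f u ∈ s then app f u else s) = app f u
      exact if_pos hfs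
    exact C334.mem_Sset₂.mpr ⟨by rw [hdomf₀]; exact hu, hu, (C334.realize_eqFm _ _ _).mpr happ⟩
  have hPhiA : RealizeIn {x : ZFSet // x ∈ A} (fun a b => a.1 ∈ b.1) C334.Phi
      ![⟨Smem, hSmemA⟩, ⟨Seq, hSeqA⟩] := by
    rw [C334.realize_Phi]
    intro u w p hp
    have hp2 : p.1 = tup ![u.1, w.1] := (C334.tupEqR_iff hA p u w).mp hp.2
    have hkey := key u.1 w.1 (by rw [← hp2]; exact hp.1)
    exact ⟨⟨tup ![u.1, u.1], hA.mem_trans hkey hSeqA⟩, hkey,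
      (C334.tupEqR_iff hA _ _ _).mpr rfl⟩
  have hPhiN := (helem 2 C334.Phi ![⟨Smem, hSmemA⟩, ⟨Seq, hSeqA⟩]).mp hPhiA
  rw [C334.realize_Phi] at hPhiN
  have haN : a ∈ N := hN.mem_trans haj (hj _ hdfA)
  have hbN : b ∈ N := hN.mem_trans hbj (hj _ hdgA)
  have hEP' : tup ![a, b] ∈ j₀ Smem := hEP
  have hpN : tup ![a, b] ∈ N := hN.mem_trans hEP' (hj _ hSmemA)
  obtain ⟨q, hq1, hq2⟩ := hPhiN ⟨a, haN⟩ ⟨b, hbN⟩ ⟨tup ![a, b], hpN⟩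
    ⟨hEP', (C334.tupEqR_iff hN _ _ _).mpr rfl⟩
  have hsim : tup ![a, a] ∈ j₀ Seq := by
    rw [← (C334.tupEqR_iff hN q _ _).mp hq2]
    exact hq1
  refine ⟨f₀, hf₀Fun, hdomf₀, ?_, hsim⟩
  intro u hu
  rw [hdomf₀] at hu
  rw [happf₀ u hu]
  exact hvfn_mem u
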